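/- arXiv:1812.04308 — 2 statements merged into one kernel-verified Lean document; each statement's English description precedes it below -/
import Mathlib

section
/- Let (X, f) be a measurable dynamical system, P a finite measurable partition of X, (μ_n) a sequence of probability measures on X, and ν_n = (1/n) Σ_{k=0}^{n-1} f^k_* μ_n. Then for all positive integers m and n, (1/m) H_{ν_n}(P^m) ≥ (1/n)(H_{μ_n}(P^n) − 3 m log(#P)), where P^m = ⋁_{k=0}^{m-1} f^{-k} P and H_μ(Q) = −Σ_{A∈Q} μ(A) log μ(A). -/
open Filter Topology MeasureTheory
open scoped ENNReal

/-- The static entropy `H_μ(P^n)` of the iterated partition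
`P^n = ⋁_{k=0}^{n-1} f^{-k} P`, computed as the sum of `-t log t` over the measures of the
cells `⋂_{k<n} f^{-k} A_k`, `(A_k) ∈ P^n`. -/
noncomputable def iterPartitionEntropy {X : Type*} [MeasurableSpace X]
    (μ : Measure X) (f : X → X) (P : Finset (Set X)) (n : ℕ) : ℝ :=
  ∑ c : Fin n → P, Real.negMulLog ((μ (⋂ k : Fin n, f^[(k : ℕ)] ⁻¹' ((c k : Set X)))).toReal)

namespace Misiurewicz
open Real

section Abstract
variable {ι α β : Type*} [Fintype ι] [Fintype α] [Fintype β]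

lemma jensen_negMulLog (w v : ι → ℝ) (hw0 : ∀ i, 0 ≤ w i) (hw1 : ∑ i, w i = 1)
    (hv : ∀ i, 0 ≤ v i) :
    ∑ i, w i * negMulLog (v i) ≤ negMulLog (∑ i, w i * v i) := by
  simpa [smul_eq_mul] using
    concaveOn_negMulLog.le_map_sum (t := Finset.univ) (w := w) (p := v)
      (fun i _ => hw0 i) hw1 (fun i _ => hv i)

lemma ent_le_log_card (p : α → ℝ) (h0 : ∀ a, 0 ≤ p a) (h1 : ∑ a, p a = 1) :
    ∑ a, negMulLog (p a) ≤ Real.log (Fintype.card α) := by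
  have hne : Nonempty α := by
    rcases isEmpty_or_nonempty α with h | h
    · simp at h1
    · exact h
  have hcard : (0:ℝ) < (Fintype.card α : ℝ) := by exact_mod_cast Fintype.card_pos
  have key := jensen_negMulLog (fun _ : α => (Fintype.card α : ℝ)⁻¹) p
      (fun _ => by positivity)
      (by rw [Finset.sum_const, Finset.card_univ, nsmul_eq_mul]
          field_simp) h0
  rw [← Finset.mul_sum, ← Finset.mul_sum, h1, mul_one] at key
  have hval : negMulLog (Fintype.card α : ℝ)⁻¹
      = (Fintype.card α : ℝ)⁻¹ * Real.log (Fintype.card α) := by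
    rw [negMulLog, Real.log_inv]; ring
  rw [hval] at key
  calc ∑ a, negMulLog (p a)
      = (Fintype.card α : ℝ) * ((Fintype.card α : ℝ)⁻¹ * ∑ a, negMulLog (p a)) := by
        field_simp
    _ ≤ (Fintype.card α : ℝ) * ((Fintype.card α : ℝ)⁻¹ * Real.log (Fintype.card α)) := by
        apply mul_le_mul_of_nonneg_left _ hcard.le
        exact key
    _ = Real.log (Fintype.card α) := by field_simp

lemma ent_nonneg (p : α → ℝ) (h0 : ∀ a, 0 ≤ p a) (h1 : ∑ a, p a ≤ 1) :
    0 ≤ ∑ a, negMulLog (p a) :=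
  Finset.sum_nonneg fun a _ => negMulLog_nonneg (h0 a)
    ((Finset.single_le_sum (fun i _ => h0 i) (Finset.mem_univ a)).trans h1)

lemma jensen_ent (w : ι → ℝ) (v : ι → α → ℝ) (hw0 : ∀ i, 0 ≤ w i)
    (hw1 : ∑ i, w i = 1) (hv : ∀ i a, 0 ≤ v i a) :
    ∑ i, w i * (∑ a, negMulLog (v i a)) ≤ ∑ a, negMulLog (∑ i, w i * v i a) := by
  have : ∑ i, w i * (∑ a, negMulLog (v i a)) = ∑ a, ∑ i, w i * negMulLog (v i a) := by
    rw [Finset.sum_comm]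
    congr 1; ext i; rw [Finset.mul_sum]
  rw [this]
  exact Finset.sum_le_sum fun a _ =>
    jensen_negMulLog w (fun i => v i a) hw0 hw1 (fun i => hv i a)

lemma ent_prod_le [Nonempty β] (p : α × β → ℝ) (h0 : ∀ z, 0 ≤ p z)
    (h1 : ∑ z, p z = 1) :
    ∑ z, negMulLog (p z) ≤
      (∑ a, negMulLog (∑ b, p (a, b))) + ∑ b, negMulLog (∑ a, p (a, b)) := by
  classical
  set p1 : α → ℝ := fun a => ∑ b, p (a, b) with hp1
  have hp10 : ∀ a, 0 ≤ p1 a := fun a => Finset.sum_nonneg fun b _ => h0 (a, b)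
  have hp1sum : ∑ a, p1 a = 1 := by
    rw [← h1, Fintype.sum_prod_type]
  set r : α → β → ℝ := fun a b =>
    if p1 a = 0 then (Fintype.card β : ℝ)⁻¹ else p (a, b) / p1 a with hr
  have hr0 : ∀ a b, 0 ≤ r a b := by
    intro a b
    by_cases h : p1 a = 0
    · simp only [hr, if_pos h]; positivity
    · simp only [hr, if_neg h]; exact div_nonneg (h0 _) (hp10 a)
  have hrsum : ∀ a, ∑ b, r a b = 1 := by
    intro a
    by_cases h : p1 a = 0
    · simp only [hr, if_pos h, Finset.sum_const, Finset.card_univ, nsmul_eq_mul]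
      rw [mul_inv_cancel₀]
      exact_mod_cast Fintype.card_ne_zero
    · simp only [hr, if_neg h, ← Finset.sum_div]
      rw [div_eq_one_iff_eq h]
  have hfac : ∀ a b, p (a, b) = p1 a * r a b := by
    intro a b
    by_cases h : p1 a = 0
    · have : p (a, b) = 0 := by
        have := (Finset.sum_eq_zero_iff_of_nonneg (fun b _ => h0 (a, b))).mp h
        exact this b (Finset.mem_univ b)
      simp [this, h]
    · simp only [hr, if_neg h]
      field_simp
  have hsplit : ∑ z, negMulLog (p z)
      = (∑ a, negMulLog (p1 a)) + ∑ a, p1 a * ∑ b, negMulLog (r a b) := by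
    rw [Fintype.sum_prod_type]
    have : ∀ a, ∑ b, negMulLog (p (a, b))
        = negMulLog (p1 a) + p1 a * ∑ b, negMulLog (r a b) := by
      intro a
      have : ∀ b, negMulLog (p (a, b))
          = r a b * negMulLog (p1 a) + p1 a * negMulLog (r a b) := by
        intro b; rw [hfac a b, negMulLog_mul]
      simp_rw [this]
      rw [Finset.sum_add_distrib, ← Finset.sum_mul, hrsum a, one_mul, ← Finset.mul_sum]
    simp_rw [this]
    rw [Finset.sum_add_distrib]
  rw [hsplit]
  have hjen := jensen_ent p1 r hp10 hp1sum hr0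
  have hmarg : ∀ b, ∑ a, p1 a * r a b = ∑ a, p (a, b) := by
    intro b; exact Finset.sum_congr rfl fun a _ => (hfac a b).symm
  have h2 : ∑ a, p1 a * ∑ b, negMulLog (r a b) ≤ ∑ b, negMulLog (∑ a, p (a, b)) := by
    refine hjen.trans_eq ?_
    exact Finset.sum_congr rfl fun b _ => by rw [hmarg]
  exact add_le_add_right h2 _ |>.trans_eq (by rfl) |>.trans_eq rfl

end Abstract

section Dynamics
variable {X : Type*} [MeasurableSpace X]

/-- cell of the partition `⋁_{j<t} f^{-(s+j)} P` -/
def mcell (f : X → X) (P : Finset (Set X)) (s t : ℕ) (c : Fin t → P) : Set X :=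
  ⋂ j : Fin t, f^[s + (j : ℕ)] ⁻¹' ((c j : Set X))

/-- the entropy of the partition `⋁_{j<t} f^{-(s+j)} P` -/
noncomputable def en (μ : Measure X) (f : X → X) (P : Finset (Set X)) (s t : ℕ) : ℝ :=
  ∑ c : Fin t → P, Real.negMulLog ((μ (mcell f P s t c)).toReal)

variable {f : X → X} {P : Finset (Set X)}

lemma mcell_measurable (hf : Measurable f) (hPmeas : ∀ A ∈ P, MeasurableSet A)
    (s t : ℕ) (c : Fin t → P) : MeasurableSet (mcell f P s t c) :=
  MeasurableSet.iInter fun j => (hf.iterate _) (hPmeas _ (c j).2)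

lemma mcell_disjoint (hPdisj : (P : Set (Set X)).PairwiseDisjoint id) (s t : ℕ) :
    Pairwise (Function.onFun Disjoint (mcell f P s t)) := by
  intro c c' hne
  obtain ⟨j, hj⟩ : ∃ j, c j ≠ c' j := by
    by_contra h; push_neg at h; exact hne (funext h)
  have hsets : ((c j : Set X)) ≠ (c' j : Set X) := fun h => hj (Subtype.ext h)
  have hd : Disjoint ((c j : Set X)) ((c' j : Set X)) := hPdisj (c j).2 (c' j).2 hsets
  exact Disjoint.mono (Set.iInter_subset _ j) (Set.iInter_subset _ j) (hd.preimage _)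

lemma mcell_cover (hPcover : ⋃ A ∈ P, A = Set.univ) (s t : ℕ) :
    ⋃ c : Fin t → P, mcell f P s t c = Set.univ := by
  ext x
  simp only [Set.mem_iUnion, Set.mem_univ, iff_true]
  have hx : ∀ y : X, ∃ A : P, y ∈ (A : Set X) := by
    intro y
    have : y ∈ ⋃ A ∈ P, A := hPcover ▸ Set.mem_univ y
    simpa using this
  choose g hg using hx
  exact ⟨fun j => g (f^[s + (j : ℕ)] x), Set.mem_iInter.mpr fun j => hg _⟩

lemma sum_measure_inter (μ : Measure X) (hf : Measurable f)
    (hPmeas : ∀ A ∈ P, MeasurableSet A)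
    (hPdisj : (P : Set (Set X)).PairwiseDisjoint id)
    (hPcover : ⋃ A ∈ P, A = Set.univ) (s t : ℕ) {S : Set X} (hS : MeasurableSet S) :
    ∑ c : Fin t → P, μ (S ∩ mcell f P s t c) = μ S := by
  have hd : Pairwise (Function.onFun Disjoint (fun c : Fin t → P => S ∩ mcell f P s t c)) :=
    fun c c' h => ((mcell_disjoint hPdisj s t) h).mono Set.inter_subset_right
      Set.inter_subset_right
  have hmeas : ∀ c : Fin t → P, MeasurableSet (S ∩ mcell f P s t c) :=
    fun c => hS.inter (mcell_measurable hf hPmeas s t c)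
  calc ∑ c : Fin t → P, μ (S ∩ mcell f P s t c)
      = ∑' c : Fin t → P, μ (S ∩ mcell f P s t c) := (tsum_fintype _).symm
    _ = μ (⋃ c : Fin t → P, S ∩ mcell f P s t c) := (measure_iUnion hd hmeas).symm
    _ = μ S := by rw [← Set.inter_iUnion, mcell_cover hPcover, Set.inter_univ]

lemma sum_toReal_mcell (μ : Measure X) [IsProbabilityMeasure μ] (hf : Measurable f)
    (hPmeas : ∀ A ∈ P, MeasurableSet A)
    (hPdisj : (P : Set (Set X)).PairwiseDisjoint id)
    (hPcover : ⋃ A ∈ P, A = Set.univ) (s t : ℕ) :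
    ∑ c : Fin t → P, (μ (mcell f P s t c)).toReal = 1 := by
  have h := sum_measure_inter μ hf hPmeas hPdisj hPcover s t MeasurableSet.univ
  simp only [Set.univ_inter] at h
  rw [← ENNReal.toReal_sum (fun c _ => measure_ne_top μ _), h, measure_univ,
    ENNReal.toReal_one]

lemma en_nonneg (μ : Measure X) [IsProbabilityMeasure μ] (s t : ℕ) :
    0 ≤ en μ f P s t :=
  Finset.sum_nonneg fun c _ => negMulLog_nonneg ENNReal.toReal_nonneg
    (by
      have := prob_le_one (μ := μ) (s := mcell f P s t c)
      exact ENNReal.toReal_le_of_le_ofReal zero_le_one (by simpa using this))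

lemma en_le_card (μ : Measure X) [IsProbabilityMeasure μ] (hf : Measurable f)
    (hPmeas : ∀ A ∈ P, MeasurableSet A)
    (hPdisj : (P : Set (Set X)).PairwiseDisjoint id)
    (hPcover : ⋃ A ∈ P, A = Set.univ) (s t : ℕ) :
    en μ f P s t ≤ t * Real.log P.card := by
  have h := ent_le_log_card (fun c : Fin t → P => (μ (mcell f P s t c)).toReal)
    (fun c => ENNReal.toReal_nonneg)
    (sum_toReal_mcell μ hf hPmeas hPdisj hPcover s t)
  have hcard : Fintype.card (Fin t → P) = P.card ^ t := by
    rw [Fintype.card_fun, Fintype.card_coe, Fintype.card_fin]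
  rw [hcard] at h
  refine h.trans_eq ?_
  rw [Nat.cast_pow, Real.log_pow]

lemma en_subadd (μ : Measure X) [IsProbabilityMeasure μ] (hf : Measurable f)
    (hP : P.Nonempty) (hPmeas : ∀ A ∈ P, MeasurableSet A)
    (hPdisj : (P : Set (Set X)).PairwiseDisjoint id)
    (hPcover : ⋃ A ∈ P, A = Set.univ) (s t u : ℕ) :
    en μ f P s (t + u) ≤ en μ f P s t + en μ f P (s + t) u := by
  classical
  have : Nonempty P := ⟨⟨hP.choose, hP.choose_spec⟩⟩
  set e : ((Fin t → P) × (Fin u → P)) ≃ (Fin (t + u) → P) :=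
    (Equiv.sumArrowEquivProdArrow (Fin t) (Fin u) P).symm.trans
      (Equiv.arrowCongr finSumFinEquiv (Equiv.refl P)) with he
  have he_castAdd : ∀ (a : Fin t → P) (b : Fin u → P) (j : Fin t),
      e (a, b) (Fin.castAdd u j) = a j := by
    intro a b j
    simp [he, Equiv.arrowCongr, finSumFinEquiv_symm_apply_castAdd]
  have he_natAdd : ∀ (a : Fin t → P) (b : Fin u → P) (j : Fin u),
      e (a, b) (Fin.natAdd t j) = b j := by
    intro a b j
    simp [he, Equiv.arrowCongr, finSumFinEquiv_symm_apply_natAdd]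
  have hsplit : ∀ (a : Fin t → P) (b : Fin u → P),
      mcell f P s (t + u) (e (a, b)) = mcell f P s t a ∩ mcell f P (s + t) u b := by
    intro a b
    ext x
    simp only [mcell, Set.mem_iInter, Set.mem_inter_iff, Set.mem_preimage]
    constructor
    · intro h
      constructor
      · intro j
        have := h (Fin.castAdd u j)
        rwa [he_castAdd, Fin.coe_castAdd] at this
      · intro j
        have := h (Fin.natAdd t j)
        rwa [he_natAdd, Fin.coe_natAdd, ← add_assoc] at this
    · rintro ⟨h1, h2⟩ j
      refine Fin.addCases ?_ ?_ j
      · intro i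
        rw [he_castAdd, Fin.coe_castAdd]
        exact h1 i
      · intro i
        rw [he_natAdd, Fin.coe_natAdd, ← add_assoc]
        exact h2 i
  set p : (Fin t → P) × (Fin u → P) → ℝ :=
    fun z => (μ (mcell f P s t z.1 ∩ mcell f P (s + t) u z.2)).toReal with hp
  have hlhs : en μ f P s (t + u) = ∑ z, negMulLog (p z) := by
    rw [en, ← Equiv.sum_comp e (fun c => negMulLog ((μ (mcell f P s (t + u) c)).toReal))]
    exact Finset.sum_congr rfl fun z _ => by rw [← Prod.mk.eta (p := z), hsplit]
  have hm1 : ∀ a : Fin t → P, ∑ b, p (a, b) = (μ (mcell f P s t a)).toReal := by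
    intro a
    rw [← ENNReal.toReal_sum (fun b _ => measure_ne_top μ _)]
    congr 1
    exact sum_measure_inter μ hf hPmeas hPdisj hPcover (s + t) u
      (mcell_measurable hf hPmeas s t a)
  have hm2 : ∀ b : Fin u → P, ∑ a, p (a, b) = (μ (mcell f P (s + t) u b)).toReal := by
    intro b
    rw [← ENNReal.toReal_sum (fun a _ => measure_ne_top μ _)]
    have : ∀ a : Fin t → P, mcell f P s t a ∩ mcell f P (s + t) u b
        = mcell f P (s + t) u b ∩ mcell f P s t a := fun a => Set.inter_comm _ _
    simp_rw [this]
    congr 1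
    exact sum_measure_inter μ hf hPmeas hPdisj hPcover s t
      (mcell_measurable hf hPmeas (s + t) u b)
  have hsum1 : ∑ z, p z = 1 := by
    rw [Fintype.sum_prod_type]
    simp_rw [hm1]
    exact sum_toReal_mcell μ hf hPmeas hPdisj hPcover s t
  have := ent_prod_le p (fun z => ENNReal.toReal_nonneg) hsum1
  rw [hlhs]
  refine this.trans ?_
  apply add_le_add
  · exact le_of_eq (Finset.sum_congr rfl fun a _ => by rw [hm1])
  · exact le_of_eq (Finset.sum_congr rfl fun b _ => by rw [hm2])

end Dynamics

section Rest
variable {X : Type*} [MeasurableSpace X] {f : X → X} {P : Finset (Set X)}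

lemma en_block (μ : Measure X) [IsProbabilityMeasure μ] (hf : Measurable f)
    (hP : P.Nonempty) (hPmeas : ∀ A ∈ P, MeasurableSet A)
    (hPdisj : (P : Set (Set X)).PairwiseDisjoint id)
    (hPcover : ⋃ A ∈ P, A = Set.univ) (m : ℕ) (hm : 0 < m) :
    ∀ L s, en μ f P s L ≤
      (∑ t ∈ Finset.range (L / m), en μ f P (s + t * m) m) + m * Real.log P.card := by
  have hL0 : 0 ≤ Real.log P.card :=
    Real.log_nonneg (by exact_mod_cast hP.card_pos)
  intro L
  induction L using Nat.strong_induction_on with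
  | _ L IH =>
    intro s
    by_cases hL : L < m
    · rw [Nat.div_eq_of_lt hL, Finset.range_zero, Finset.sum_empty, zero_add]
      calc en μ f P s L ≤ L * Real.log P.card :=
            en_le_card μ hf hPmeas hPdisj hPcover s L
        _ ≤ m * Real.log P.card := by
            apply mul_le_mul_of_nonneg_right _ hL0
            exact_mod_cast hL.le
    · push_neg at hL
      obtain ⟨u, rfl⟩ : ∃ u, L = m + u := ⟨L - m, by omega⟩
      have h1 : en μ f P s (m + u) ≤ en μ f P s m + en μ f P (s + m) u :=
        en_subadd μ hf hP hPmeas hPdisj hPcover s m u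
      have h2 := IH u (by omega) (s + m)
      have hdiv : (m + u) / m = u / m + 1 := by
        rw [add_comm m u, Nat.add_div_right _ hm]
      rw [hdiv, Finset.sum_range_succ']
      have hidx : ∀ t : ℕ, s + (t + 1) * m = s + m + t * m := by intro t; ring
      simp_rw [hidx, Nat.zero_mul, Nat.add_zero]
      linarith
end Rest


section Key
variable {X : Type*} [MeasurableSpace X] {f : X → X} {P : Finset (Set X)}

set_option maxHeartbeats 1000000 in
lemma en_key (μ : Measure X) [IsProbabilityMeasure μ] (hf : Measurable f)
    (hP : P.Nonempty) (hPmeas : ∀ A ∈ P, MeasurableSet A)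
    (hPdisj : (P : Set (Set X)).PairwiseDisjoint id)
    (hPcover : ⋃ A ∈ P, A = Set.univ) (m n : ℕ) (hm : 0 < m) :
    (m : ℝ) * en μ f P 0 n ≤
      (∑ s ∈ Finset.range n, en μ f P s m) + 2 * m ^ 2 * Real.log P.card := by
  classical
  have hL0 : 0 ≤ Real.log P.card := Real.log_nonneg (by exact_mod_cast hP.card_pos)
  -- claim C(j)
  have hC : ∀ j < m, en μ f P 0 n ≤
      (∑ t ∈ Finset.range ((n - j) / m), en μ f P (j + t * m) m)
        + 2 * m * Real.log P.card := by
    intro j hj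
    by_cases hjn : n ≤ j
    · have h0 : n - j = 0 := by omega
      rw [h0, Nat.zero_div, Finset.range_zero, Finset.sum_empty, zero_add]
      calc en μ f P 0 n ≤ n * Real.log P.card :=
            en_le_card μ hf hPmeas hPdisj hPcover 0 n
        _ ≤ 2 * m * Real.log P.card := by
            apply mul_le_mul_of_nonneg_right _ hL0
            have : (n : ℝ) ≤ m := by exact_mod_cast (hjn.trans hj.le)
            linarith
    · push_neg at hjn
      obtain ⟨u, rfl⟩ : ∃ u, n = j + u := ⟨n - j, by omega⟩
      have hu : j + u - j = u := by omega
      have hsub : en μ f P 0 (j + u) ≤ en μ f P 0 j + en μ f P (0 + j) u :=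
        en_subadd μ hf hP hPmeas hPdisj hPcover 0 j u
      rw [zero_add] at hsub
      have hblock := en_block μ hf hP hPmeas hPdisj hPcover m hm u j
      have hj_le : en μ f P 0 j ≤ m * Real.log P.card := by
        calc en μ f P 0 j ≤ j * Real.log P.card :=
              en_le_card μ hf hPmeas hPdisj hPcover 0 j
          _ ≤ m * Real.log P.card := by
              apply mul_le_mul_of_nonneg_right _ hL0
              exact_mod_cast hj.le
      rw [hu]
      linarith
  -- sum the claim over j < m
  have hsumC : (m : ℝ) * en μ f P 0 n ≤
      (∑ j ∈ Finset.range m, ∑ t ∈ Finset.range ((n - j) / m), en μ f P (j + t * m) m)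
        + 2 * m ^ 2 * Real.log P.card := by
    have h1 : (m : ℝ) * en μ f P 0 n = ∑ _j ∈ Finset.range m, en μ f P 0 n := by
      rw [Finset.sum_const, Finset.card_range, nsmul_eq_mul]
    rw [h1]
    refine (Finset.sum_le_sum (fun j hj => hC j (Finset.mem_range.mp hj))).trans ?_
    rw [Finset.sum_add_distrib, Finset.sum_const, Finset.card_range, nsmul_eq_mul]
    have h3 : (m : ℝ) * (2 * m * Real.log P.card) = 2 * m ^ 2 * Real.log P.card := by
      ring
    rw [h3]
  refine hsumC.trans ?_
  gcongr
  -- double counting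
  rw [Finset.sum_sigma']
  set D := (Finset.range m).sigma (fun j => Finset.range ((n - j) / m)) with hD
  set e : (Σ _ : ℕ, ℕ) → ℕ := fun x => x.1 + x.2 * m with he
  have hmem : ∀ x ∈ D, e x ∈ Finset.range n := by
    rintro ⟨j, t⟩ hx
    rw [hD, Finset.mem_sigma, Finset.mem_range, Finset.mem_range] at hx
    dsimp only at hx
    obtain ⟨hj, ht⟩ := hx
    have h1 : (t + 1) * m ≤ (n - j) / m * m :=
      Nat.mul_le_mul_right m (by omega)
    have h2 : (n - j) / m * m ≤ n - j := Nat.div_mul_le_self _ _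
    have h3 : t * m + m ≤ n - j := by
      have : (t + 1) * m = t * m + m := by ring
      omega
    rw [Finset.mem_range, he]
    simp only
    omega
  have hinj : ∀ x ∈ D, ∀ y ∈ D, e x = e y → x = y := by
    rintro ⟨j, t⟩ hx ⟨j', t'⟩ hy hxy
    rw [hD, Finset.mem_sigma, Finset.mem_range, Finset.mem_range] at hx hy
    dsimp only at hx hy
    rw [he] at hxy
    simp only at hxy
    have h1 : (j + t * m) % m = j % m := Nat.add_mul_mod_self_right j t m
    have h2 : (j' + t' * m) % m = j' % m := Nat.add_mul_mod_self_right j' t' m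
    have hjj : j = j' := by
      rw [← Nat.mod_eq_of_lt hx.1, ← Nat.mod_eq_of_lt hy.1, ← h1, ← h2, hxy]
    subst hjj
    have htt : t * m = t' * m := by omega
    have : t = t' := Nat.eq_of_mul_eq_mul_right hm htt
    subst this
    rfl
  calc ∑ x ∈ D, en μ f P (e x) m
      = ∑ s ∈ D.image e, en μ f P s m := by rw [Finset.sum_image hinj]
    _ ≤ ∑ s ∈ Finset.range n, en μ f P s m := by
        apply Finset.sum_le_sum_of_subset_of_nonneg
        · intro s hs
          rw [Finset.mem_image] at hs
          obtain ⟨x, hx, rfl⟩ := hs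
          exact hmem x hx
        · intro s _ _
          exact en_nonneg μ s m
end Key

end Misiurewicz

set_option maxHeartbeats 1000000 in
/-- Misiurewicz's entropy estimate: if `ν_n = (1/n) Σ_{k<n} f^k_* μ_n`, then for all
`m, n ≥ 1`, `(1/m) H_{ν_n}(P^m) ≥ (1/n) (H_{μ_n}(P^n) − 3 m log #P)`. -/
theorem misiurewicz_entropy_estimate {X : Type*} [MeasurableSpace X]
    (f : X → X) (hf : Measurable f)
    (P : Finset (Set X)) (hPmeas : ∀ A ∈ P, MeasurableSet A)
    (hPdisj : (P : Set (Set X)).PairwiseDisjoint id)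
    (hPcover : ⋃ A ∈ P, A = Set.univ)
    (μ : ℕ → Measure X) (hμ : ∀ n, IsProbabilityMeasure (μ n))
    (ν : ℕ → Measure X)
    (hν : ∀ n : ℕ, ν n = ((n : ℝ≥0∞))⁻¹ • ∑ k ∈ Finset.range n, (μ n).map f^[k])
    (m n : ℕ) (hm : 0 < m) (hn : 0 < n) :
    (1 / (m : ℝ)) * iterPartitionEntropy (ν n) f P m ≥
      (1 / (n : ℝ)) * (iterPartitionEntropy (μ n) f P n - 3 * m * Real.log P.card) := by
  classical
  rcases isEmpty_or_nonempty X with hX | hX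
  · exfalso
    have h1 := (hμ 0).measure_univ
    rw [Set.univ_eq_empty_iff.mpr hX, measure_empty] at h1
    exact zero_ne_one h1
  obtain ⟨x⟩ := hX
  have hP : P.Nonempty := by
    have hx : x ∈ ⋃ A ∈ P, A := hPcover ▸ Set.mem_univ x
    rw [Set.mem_iUnion₂] at hx
    obtain ⟨A, hA, -⟩ := hx
    exact ⟨A, hA⟩
  have hL0 : 0 ≤ Real.log P.card := Real.log_nonneg (by exact_mod_cast hP.card_pos)
  have hn' : (0 : ℝ) < n := by exact_mod_cast hn
  have hm' : (0 : ℝ) < m := by exact_mod_cast hm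
  haveI := hμ n
  have hIPn : iterPartitionEntropy (μ n) f P n = Misiurewicz.en (μ n) f P 0 n := by
    unfold iterPartitionEntropy Misiurewicz.en Misiurewicz.mcell
    simp only [zero_add]
  have hIPm : iterPartitionEntropy (ν n) f P m = Misiurewicz.en (ν n) f P 0 m := by
    unfold iterPartitionEntropy Misiurewicz.en Misiurewicz.mcell
    simp only [zero_add]
  have key := Misiurewicz.en_key (μ n) hf hP hPmeas hPdisj hPcover m n hm
  have hshift : ∀ (k : ℕ) (c : Fin m → P),
      f^[k] ⁻¹' (Misiurewicz.mcell f P 0 m c) = Misiurewicz.mcell f P k m c := by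
    intro k c
    unfold Misiurewicz.mcell
    rw [Set.preimage_iInter]
    refine Set.iInter_congr fun j => ?_
    rw [← Set.preimage_comp, ← Function.iterate_add]
    have hjk : 0 + (j : ℕ) + k = k + (j : ℕ) := by omega
    rw [hjk]
  have hnuc : ∀ c : Fin m → P,
      ((ν n) (Misiurewicz.mcell f P 0 m c)).toReal
        = ∑ k : Fin n, (n : ℝ)⁻¹ * ((μ n) (Misiurewicz.mcell f P (k : ℕ) m c)).toReal := by
    intro c
    have hms : MeasurableSet (Misiurewicz.mcell f P 0 m c) :=
      Misiurewicz.mcell_measurable hf hPmeas 0 m c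
    rw [hν n, Measure.smul_apply, smul_eq_mul]
    have happ : (∑ k ∈ Finset.range n, (μ n).map f^[k]) (Misiurewicz.mcell f P 0 m c)
        = ∑ k ∈ Finset.range n, (μ n) (Misiurewicz.mcell f P k m c) := by
      rw [Measure.finset_sum_apply]
      refine Finset.sum_congr rfl fun k _ => ?_
      rw [Measure.map_apply (hf.iterate k) hms, hshift k c]
    rw [happ, ENNReal.toReal_mul,
      ENNReal.toReal_sum (fun k _ => measure_ne_top _ _), Finset.mul_sum,
      ← Fin.sum_univ_eq_sum_range
        (fun k => ((n : ℝ≥0∞))⁻¹.toReal * ((μ n) (Misiurewicz.mcell f P k m c)).toReal) n]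
    simp [ENNReal.toReal_inv]
  have hconc : ∑ s ∈ Finset.range n, Misiurewicz.en (μ n) f P s m
      ≤ (n : ℝ) * Misiurewicz.en (ν n) f P 0 m := by
    have hw1 : ∑ _k : Fin n, (n : ℝ)⁻¹ = 1 := by
      rw [Finset.sum_const, Finset.card_univ, Fintype.card_fin, nsmul_eq_mul]
      field_simp
    have hjen := Misiurewicz.jensen_ent (ι := Fin n)
      (fun _ => (n : ℝ)⁻¹)
      (fun k c => ((μ n) (Misiurewicz.mcell f P (k : ℕ) m c)).toReal)
      (fun _ => by positivity) hw1 (fun _ _ => ENNReal.toReal_nonneg)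
    have hrhs : ∑ c : Fin m → P,
        Real.negMulLog (∑ k : Fin n, (n : ℝ)⁻¹
          * ((μ n) (Misiurewicz.mcell f P (k : ℕ) m c)).toReal)
        = Misiurewicz.en (ν n) f P 0 m := by
      unfold Misiurewicz.en
      exact Finset.sum_congr rfl fun c _ => by rw [← hnuc c]
    rw [hrhs] at hjen
    have hfr : ∑ s ∈ Finset.range n, Misiurewicz.en (μ n) f P s m
        = ∑ k : Fin n, Misiurewicz.en (μ n) f P (k : ℕ) m :=
      (Fin.sum_univ_eq_sum_range _ n).symm
    rw [hfr]
    have hfold : ∑ k : Fin n, (n : ℝ)⁻¹ * Misiurewicz.en (μ n) f P (k : ℕ) m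
        ≤ Misiurewicz.en (ν n) f P 0 m := hjen
    rw [← Finset.mul_sum] at hfold
    calc ∑ k : Fin n, Misiurewicz.en (μ n) f P (k : ℕ) m
        = (n : ℝ) * ((n : ℝ)⁻¹ * ∑ k : Fin n, Misiurewicz.en (μ n) f P (k : ℕ) m) := by
          field_simp
      _ ≤ (n : ℝ) * Misiurewicz.en (ν n) f P 0 m := by
          exact mul_le_mul_of_nonneg_left hfold hn'.le
  rw [ge_iff_le, hIPn, hIPm, div_mul_eq_mul_div, div_mul_eq_mul_div, one_mul, one_mul,
    div_le_div_iff₀ hn' hm']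
  nlinarith [key, hconc, hL0, mul_nonneg (mul_nonneg hm'.le hm'.le) hL0]
end

section
/- Let (M, f) be a continuous dynamical system on a compact metric space. The map pw : M → K(P(M)) sending x to the set pw(x) of weak-* accumulation points of the empirical measures (μ_n^x)_n is Borel measurable, where K(P(M)) is the space of nonempty compact subsets of the space of Borel probability measures on M, with the Hausdorff metric. -/
open Filter Topology MeasureTheory TopologicalSpace
open scoped ENNReal NNReal

section AuxGeneral

variable {X : Type*} [TopologicalSpace X]

/-- The set of cluster points of a sequence equals the intersection of closures of tails. -/
lemma pwAux_clusterSet_eq_iInter (u : ℕ → X) :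
    {ν : X | MapClusterPt ν atTop u} = ⋂ N : ℕ, closure (u '' Set.Ici N) := by
  ext ν
  simp only [Set.mem_setOf_eq, Set.mem_iInter, mapClusterPt_iff_frequently, mem_closure_iff_nhds]
  constructor
  · intro h N t ht
    obtain ⟨n, hn, hmem⟩ := (frequently_atTop.mp (h t ht)) N
    exact ⟨u n, hmem, ⟨n, hn, rfl⟩⟩
  · intro h s hs
    rw [frequently_atTop]
    intro N
    obtain ⟨z, hz, n, hn, rfl⟩ := h N s hs
    exact ⟨n, hn, hz⟩

lemma pwAux_image_Ici_eq_range (u : ℕ → X) (N : ℕ) :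
    u '' Set.Ici N = Set.range (fun j => u (N + j)) := by
  ext z
  constructor
  · rintro ⟨n, hn, rfl⟩
    exact ⟨n - N, congrArg u (Nat.add_sub_cancel' hn)⟩
  · rintro ⟨j, rfl⟩
    exact ⟨N + j, Nat.le_add_right N j, rfl⟩

end AuxGeneral

section AuxCriterion

/-- Measurability criterion: a map into a second countable metric space with the Borel
σ-algebra is measurable provided all distance evaluations are measurable. -/
lemma pwAux_measurable_of_measurable_dist {α β : Type*} [MeasurableSpace α] [MetricSpace β]
    [SecondCountableTopology β] {g : α → β}
    (h : ∀ y : β, Measurable fun x => dist (g x) y) :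
    @Measurable α β _ (borel β) g := by
  cases isEmpty_or_nonempty β with
  | inl hβ =>
    haveI : IsEmpty α := ⟨fun a => IsEmpty.false (g a)⟩
    exact @measurable_of_empty α β _ (borel β) _ g
  | inr hβ =>
    obtain ⟨u, hu⟩ := TopologicalSpace.exists_dense_seq β
    have basis : TopologicalSpace.IsTopologicalBasis
        {s : Set β | ∃ j k : ℕ, s = Metric.ball (u j) ((k + 1 : ℝ))⁻¹} := by
      refine TopologicalSpace.isTopologicalBasis_of_isOpen_of_nhds ?_ ?_
      · rintro s ⟨j, k, rfl⟩
        exact Metric.isOpen_ball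
      · intro a v hav hv
        obtain ⟨ε, hε, hball⟩ := Metric.isOpen_iff.mp hv a hav
        obtain ⟨k, hk⟩ := exists_nat_gt (2 / ε)
        have hkpos : (0:ℝ) < (k:ℝ) + 1 := by positivity
        have hrad : ((k:ℝ) + 1)⁻¹ < ε / 2 := by
          rw [inv_lt_iff_one_lt_mul₀ hkpos]
          have h2ε : 0 < ε / 2 := by positivity
          rw [div_lt_iff₀ hε] at hk
          nlinarith
        obtain ⟨j, hj⟩ := hu.exists_dist_lt a (show (0:ℝ) < ((k:ℝ)+1)⁻¹ by positivity)
        refine ⟨Metric.ball (u j) ((k + 1 : ℝ))⁻¹, ⟨j, k, rfl⟩, ?_, ?_⟩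
        · simpa [Metric.mem_ball, dist_comm] using hj
        · intro z hz
          apply hball
          rw [Metric.mem_ball] at hz ⊢
          have h1 : dist z a ≤ dist z (u j) + dist (u j) a := dist_triangle _ _ _
          rw [dist_comm] at hj
          calc dist z a ≤ dist z (u j) + dist (u j) a := h1
            _ < ((k:ℝ)+1)⁻¹ + ((k:ℝ)+1)⁻¹ := by
                exact add_lt_add hz hj
            _ ≤ ε / 2 + ε / 2 := by linarith
            _ = ε := by ring
    have hcnt : {s : Set β | ∃ j k : ℕ, s = Metric.ball (u j) ((k + 1 : ℝ))⁻¹}.Countable := by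
      have : {s : Set β | ∃ j k : ℕ, s = Metric.ball (u j) ((k + 1 : ℝ))⁻¹}
          = Set.range (fun p : ℕ × ℕ => Metric.ball (u p.1) ((p.2 + 1 : ℝ))⁻¹) := by
        ext s
        constructor
        · rintro ⟨j, k, rfl⟩; exact ⟨(j, k), rfl⟩
        · rintro ⟨⟨j, k⟩, rfl⟩; exact ⟨j, k, rfl⟩
      rw [this]
      exact Set.countable_range _
    rw [basis.borel_eq_generateFrom]
    refine measurable_generateFrom ?_
    rintro t ⟨j, k, rfl⟩
    have : g ⁻¹' Metric.ball (u j) ((k + 1 : ℝ))⁻¹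
        = {x | dist (g x) (u j) < ((k:ℝ) + 1)⁻¹} := by
      ext x; simp [Metric.mem_ball]
    rw [this]
    exact measurableSet_lt (h (u j)) measurable_const

end AuxCriterion

section Prokhorov

variable {M : Type*} [MetricSpace M] [CompactSpace M] [MeasurableSpace M] [BorelSpace M]

/-- Sequential compactness of the space of probability measures on a compact metric space. -/
lemma pwAux_exists_subseq_tendsto (ν : ℕ → ProbabilityMeasure M) :
    ∃ (μ : ProbabilityMeasure M) (φ : ℕ → ℕ), StrictMono φ ∧
      Tendsto (fun k => ν (φ k)) atTop (𝓝 μ) := by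
  classical
  set B : Set (Set M) := TopologicalSpace.countableBasis M with hBdef
  have hB : TopologicalSpace.IsTopologicalBasis B := TopologicalSpace.isBasis_countableBasis M
  have hBc : B.Countable := TopologicalSpace.countable_countableBasis M
  set 𝒰 : Set (Set M) := (fun t => ⋃₀ t) '' {t : Set (Set M) | t.Finite ∧ t ⊆ B} with h𝒰def
  have hUc : 𝒰.Countable := (Set.countable_setOf_finite_subset hBc).image _
  have hUne : 𝒰.Nonempty := ⟨∅, ⟨∅, ⟨Set.finite_empty, Set.empty_subset _⟩, Set.sUnion_empty⟩⟩
  obtain ⟨e, he⟩ := hUc.exists_eq_range hUne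
  have he_mem : ∀ i, e i ∈ 𝒰 := fun i => he ▸ Set.mem_range_self i
  have he_open : ∀ i, IsOpen (e i) := by
    intro i
    obtain ⟨t, ⟨htf, htB⟩, hts⟩ := he_mem i
    rw [← hts]
    exact isOpen_sUnion fun s hs => hB.isOpen (htB hs)
  have he_union : ∀ i j, ∃ m, e m = e i ∪ e j := by
    intro i j
    obtain ⟨t₁, ⟨ht₁f, ht₁B⟩, ht₁⟩ := he_mem i
    obtain ⟨t₂, ⟨ht₂f, ht₂B⟩, ht₂⟩ := he_mem j
    have : e i ∪ e j ∈ 𝒰 := by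
      refine ⟨t₁ ∪ t₂, ⟨ht₁f.union ht₂f, Set.union_subset ht₁B ht₂B⟩, ?_⟩
      show Set.sUnion (t₁ ∪ t₂) = e i ∪ e j
      rw [Set.sUnion_union, ← ht₁, ← ht₂]
    rw [he] at this
    obtain ⟨m, hm⟩ := this
    exact ⟨m, hm⟩
  have he_cover : ∀ (K : Set M), IsCompact K → ∀ (G : Set M), IsOpen G → K ⊆ G →
      ∃ i, K ⊆ e i ∧ e i ⊆ G := by
    intro K hK G hG hKG
    have hx : ∀ x ∈ K, ∃ v ∈ B, x ∈ v ∧ v ⊆ G :=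
      fun x hx => hB.exists_subset_of_mem_open (hKG hx) hG
    choose! v hvB hxv hvG using hx
    obtain ⟨s, hsK, hscov⟩ := hK.elim_nhds_subcover v
      (fun x hx => (hB.isOpen (hvB x hx)).mem_nhds (hxv x hx))
    have hmem𝒰 : (⋃ x ∈ s, v x) ∈ 𝒰 := by
      refine ⟨v '' ↑s, ⟨(s.finite_toSet).image v, ?_⟩, ?_⟩
      · rintro w ⟨x, hxs, rfl⟩
        exact hvB x (hsK x hxs)
      · show Set.sUnion (v '' ↑s) = ⋃ x ∈ s, v x
        simp [Set.sUnion_image]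
    rw [he] at hmem𝒰
    obtain ⟨i, hi⟩ := hmem𝒰
    refine ⟨i, ?_, ?_⟩
    · rw [hi]; exact hscov
    · rw [hi]
      refine Set.iUnion₂_subset fun x hxs => hvG x (hsK x hxs)
  -- extract a subsequence along which all (ν k) (e i) converge
  obtain ⟨L, φ, hφ, hLT⟩ :=
    CompactSpace.tendsto_subseq (fun k => (fun i => (ν k : Measure M) (e i)))
  have hL : ∀ i, Tendsto (fun k => (ν (φ k) : Measure M) (e i)) atTop (𝓝 (L i)) := by
    intro i
    have := hLT
    rw [tendsto_pi_nhds] at this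
    exact this i
  have hL_le_one : ∀ i, L i ≤ 1 :=
    fun i => le_of_tendsto (hL i) (Eventually.of_forall fun k => prob_le_one)
  -- the content
  set Cfun : TopologicalSpace.Compacts M → ℝ≥0∞ :=
    fun K => ⨅ (i) (_ : (K : Set M) ⊆ e i), L i with hCdef
  have hC_exists : ∀ K : TopologicalSpace.Compacts M, ∃ i, (K : Set M) ⊆ e i := by
    intro K
    obtain ⟨i, h1, _⟩ := he_cover K K.2 Set.univ isOpen_univ (Set.subset_univ _)
    exact ⟨i, h1⟩
  have hC_le_one : ∀ K, Cfun K ≤ 1 := by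
    intro K
    obtain ⟨i, hi⟩ := hC_exists K
    exact le_trans (iInf₂_le i hi) (hL_le_one i)
  have hC_ne_top : ∀ K, Cfun K ≠ ⊤ := fun K => ne_top_of_le_ne_top ENNReal.one_ne_top (hC_le_one K)
  have hC_mono : ∀ K₁ K₂ : TopologicalSpace.Compacts M, (K₁ : Set M) ⊆ K₂ → Cfun K₁ ≤ Cfun K₂ :=
    fun K₁ K₂ h => le_iInf₂ fun i hi => iInf₂_le i (h.trans hi)
  have hC_sup_le_aux : ∀ K₁ K₂ : TopologicalSpace.Compacts M, ∀ i₁, (K₁ : Set M) ⊆ e i₁ →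
      ∀ i₂, (K₂ : Set M) ⊆ e i₂ → Cfun (K₁ ⊔ K₂) ≤ L i₁ + L i₂ := by
    intro K₁ K₂ i₁ h₁ i₂ h₂
    obtain ⟨m, hm⟩ := he_union i₁ i₂
    refine le_trans (iInf₂_le m ?_) ?_
    · show ((K₁ ⊔ K₂ : TopologicalSpace.Compacts M) : Set M) ⊆ e m
      rw [hm, TopologicalSpace.Compacts.coe_sup]
      exact Set.union_subset_union h₁ h₂
    · refine le_of_tendsto_of_tendsto' (hL m) ((hL i₁).add (hL i₂)) fun k => ?_
      rw [hm]
      exact measure_union_le _ _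
  have hC_sup_le : ∀ K₁ K₂ : TopologicalSpace.Compacts M,
      Cfun (K₁ ⊔ K₂) ≤ Cfun K₁ + Cfun K₂ := by
    intro K₁ K₂
    have e₁ : Cfun K₁ = ⨅ p : {i // (K₁ : Set M) ⊆ e i}, L p.1 := by
      rw [hCdef]; exact iInf_subtype'
    have e₂ : Cfun K₂ = ⨅ p : {i // (K₂ : Set M) ⊆ e i}, L p.1 := by
      rw [hCdef]; exact iInf_subtype'
    rw [e₁, e₂, ENNReal.iInf_add]
    refine le_iInf fun p => ?_
    rw [ENNReal.add_iInf]
    refine le_iInf fun q => ?_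
    exact hC_sup_le_aux K₁ K₂ p.1 p.2 q.1 q.2
  have hC_sup_disjoint : ∀ K₁ K₂ : TopologicalSpace.Compacts M,
      Disjoint (K₁ : Set M) (K₂ : Set M) → Cfun (K₁ ⊔ K₂) = Cfun K₁ + Cfun K₂ := by
    intro K₁ K₂ hdisj
    refine le_antisymm (hC_sup_le K₁ K₂) ?_
    obtain ⟨V₁, V₂, hV₁, hV₂, hKV₁, hKV₂, hVdisj⟩ :=
      SeparatedNhds.of_isCompact_isCompact K₁.2 K₂.2 hdisj
    refine le_iInf₂ fun i hi => ?_
    have hsub : ((K₁ ⊔ K₂ : TopologicalSpace.Compacts M) : Set M) ⊆ e i := hi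
    rw [TopologicalSpace.Compacts.coe_sup] at hsub
    obtain ⟨i₁, hKi₁, hi₁sub⟩ := he_cover K₁ K₁.2 (e i ∩ V₁)
      ((he_open i).inter hV₁) (Set.subset_inter (Set.subset_union_left.trans hsub) hKV₁)
    obtain ⟨i₂, hKi₂, hi₂sub⟩ := he_cover K₂ K₂.2 (e i ∩ V₂)
      ((he_open i).inter hV₂) (Set.subset_inter (Set.subset_union_right.trans hsub) hKV₂)
    have hdisj' : Disjoint (e i₁) (e i₂) :=
      Set.disjoint_of_subset (hi₁sub.trans Set.inter_subset_right)
        (hi₂sub.trans Set.inter_subset_right) hVdisj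
    have hkey : ∀ k, (ν k : Measure M) (e i₁) + (ν k : Measure M) (e i₂)
        ≤ (ν k : Measure M) (e i) := by
      intro k
      rw [← measure_union hdisj' (he_open i₂).measurableSet]
      refine measure_mono (Set.union_subset (hi₁sub.trans Set.inter_subset_left)
        (hi₂sub.trans Set.inter_subset_left))
    have : L i₁ + L i₂ ≤ L i :=
      le_of_tendsto_of_tendsto' ((hL i₁).add (hL i₂)) (hL i) (fun k => hkey (φ k))
    exact le_trans (add_le_add (iInf₂_le i₁ hKi₁) (iInf₂_le i₂ hKi₂)) this
  -- bundle as a Content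
  set 𝒞 : MeasureTheory.Content M :=
    { toFun := fun K => (Cfun K).toNNReal
      mono' := by
        intro K₁ K₂ h
        show (Cfun K₁).toNNReal ≤ (Cfun K₂).toNNReal
        exact ENNReal.toNNReal_mono (hC_ne_top K₂) (hC_mono K₁ K₂ h)
      sup_disjoint' := by
        intro K₁ K₂ hdisj _ _
        show (Cfun (K₁ ⊔ K₂)).toNNReal = (Cfun K₁).toNNReal + (Cfun K₂).toNNReal
        rw [hC_sup_disjoint K₁ K₂ hdisj, ENNReal.toNNReal_add (hC_ne_top K₁) (hC_ne_top K₂)]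
      sup_le' := by
        intro K₁ K₂
        show (Cfun (K₁ ⊔ K₂)).toNNReal ≤ (Cfun K₁).toNNReal + (Cfun K₂).toNNReal
        have := hC_sup_le K₁ K₂
        have h2 : Cfun K₁ + Cfun K₂ ≠ ⊤ :=
          ENNReal.add_ne_top.mpr ⟨hC_ne_top K₁, hC_ne_top K₂⟩
        calc (Cfun (K₁ ⊔ K₂)).toNNReal ≤ (Cfun K₁ + Cfun K₂).toNNReal :=
              ENNReal.toNNReal_mono h2 this
          _ = (Cfun K₁).toNNReal + (Cfun K₂).toNNReal :=
              ENNReal.toNNReal_add (hC_ne_top K₁) (hC_ne_top K₂) } with h𝒞def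
  have hCoe : ∀ K : TopologicalSpace.Compacts M, (𝒞 K : ℝ≥0∞) = Cfun K := by
    intro K
    show ((Cfun K).toNNReal : ℝ≥0∞) = Cfun K
    exact ENNReal.coe_toNNReal (hC_ne_top K)
  set μ0 : Measure M := 𝒞.measure with hμ0def
  have hμ0_open : ∀ {G : Set M}, IsOpen G →
      μ0 G = ⨆ (K : TopologicalSpace.Compacts M) (_ : (K : Set M) ⊆ G), (𝒞 K : ℝ≥0∞) := by
    intro G hG
    rw [hμ0def, 𝒞.measure_apply hG.measurableSet, 𝒞.outerMeasure_of_isOpen G hG]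
    rfl
  have hμ0_univ : μ0 Set.univ = 1 := by
    rw [hμ0_open isOpen_univ]
    apply le_antisymm
    · refine iSup₂_le fun K _ => ?_
      rw [hCoe]
      exact hC_le_one K
    · have hKuniv : ((⟨Set.univ, isCompact_univ⟩ : TopologicalSpace.Compacts M) : Set M)
          ⊆ Set.univ := Set.subset_univ _
      refine le_trans ?_ (le_iSup₂ (⟨Set.univ, isCompact_univ⟩ : TopologicalSpace.Compacts M)
        hKuniv)
      rw [hCoe]
      refine le_iInf₂ fun i hi => ?_
      have hei : e i = Set.univ := Set.eq_univ_of_univ_subset hi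
      have : Tendsto (fun k => (ν (φ k) : Measure M) (e i)) atTop (𝓝 1) := by
        have : ∀ k, (ν (φ k) : Measure M) (e i) = 1 := by
          intro k
          rw [hei]
          exact measure_univ
        simpa [this] using tendsto_const_nhds
      exact le_of_eq (tendsto_nhds_unique this (hL i))
  haveI hμ0prob : IsProbabilityMeasure μ0 := ⟨hμ0_univ⟩
  refine ⟨⟨μ0, hμ0prob⟩, φ, hφ, ?_⟩
  apply MeasureTheory.tendsto_of_forall_isOpen_le_liminf
  intro G hG
  have key : μ0 G ≤ atTop.liminf (fun k => (ν (φ k) : Measure M) G) := by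
    rw [hμ0_open hG]
    refine iSup₂_le fun K hKG => ?_
    obtain ⟨i, hKi, hiG⟩ := he_cover K K.2 G hG hKG
    rw [hCoe]
    refine le_trans (iInf₂_le i hKi) ?_
    rw [← (hL i).liminf_eq]
    exact liminf_le_liminf (Eventually.of_forall fun k => measure_mono hiG)
  -- convert to the NNReal statement
  have aux : ((atTop.liminf (fun k : ℕ => ν (φ k) G) : ℝ≥0) : ℝ≥0∞)
      = atTop.liminf (fun k : ℕ => ((ν (φ k) G : ℝ≥0) : ℝ≥0∞)) := by
    refine Monotone.map_liminf_of_continuousAt (F := atTop) ENNReal.coe_mono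
      (fun k => ν (φ k) G) ?_ ?_ ?_
    · exact ENNReal.continuous_coe.continuousAt
    · exact IsBoundedUnder.isCoboundedUnder_ge ⟨1, by
        simp only [eventually_map, eventually_atTop]
        exact ⟨0, fun k _ => ProbabilityMeasure.apply_le_one _ _⟩⟩
    · exact ⟨0, by simp⟩
  rw [← ENNReal.coe_le_coe, aux]
  simp only [ProbabilityMeasure.ennreal_coeFn_eq_coeFn_toMeasure]
  exact (ProbabilityMeasure.ennreal_coeFn_eq_coeFn_toMeasure _ _).trans_le key

lemma pwAux_compactSpace : CompactSpace (ProbabilityMeasure M) := by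
  letI : MetricSpace (ProbabilityMeasure M) :=
    TopologicalSpace.metrizableSpaceMetric (ProbabilityMeasure M)
  rw [compactSpace_iff_seqCompactSpace]
  constructor
  intro x _
  obtain ⟨μ, φ, hφ, ht⟩ := pwAux_exists_subseq_tendsto x
  exact ⟨μ, Set.mem_univ _, φ, hφ, ht⟩

end Prokhorov

section AuxHausdorff

open EMetric Metric

variable {X : Type*} [MetricSpace X] [CompactSpace X]

/-- In a compact metric space, the tails of a sequence converge in Hausdorff edistance to the
set of cluster points. -/
lemma pwAux_tendsto_hausdorffEdist_tail (u : ℕ → X) (S : Set X)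
    (hS : S = {ν | MapClusterPt ν atTop u}) :
    Tendsto (fun N => hausdorffEdist (u '' Set.Ici N) S) atTop (𝓝 0) := by
  have hSsub : ∀ N : ℕ, S ⊆ closure (u '' Set.Ici N) := by
    intro N
    rw [hS, pwAux_clusterSet_eq_iInter]
    exact fun ν hν => Set.mem_iInter.mp hν N
  have hEq : ∀ N, hausdorffEdist (u '' Set.Ici N) S
      = ⨆ x ∈ u '' Set.Ici N, infEdist x S := by
    intro N
    rw [show hausdorffEdist (u '' Set.Ici N) S = (⨆ x ∈ u '' Set.Ici N, infEdist x S) ⊔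
      ⨆ y ∈ S, infEdist y (u '' Set.Ici N) from hausdorffEDist_def _ _]
    have h2 : (⨆ y ∈ S, infEdist y (u '' Set.Ici N)) = 0 := by
      refine le_antisymm (iSup₂_le fun y hy => ?_) zero_le
      rw [infEdist, ← infEDist_closure]
      rw [infEdist_zero_of_mem (hSsub N hy)]
    rw [h2, sup_eq_left.mpr zero_le]
  rw [ENNReal.tendsto_nhds_zero]
  intro ε hε
  by_contra hcon
  rw [Filter.not_eventually] at hcon
  have hfreq : ∃ᶠ n in atTop, ε < infEdist (u n) S := by
    rw [frequently_atTop] at hcon ⊢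
    intro N
    obtain ⟨N', hN', hgt⟩ := hcon N
    rw [hEq N', not_le] at hgt
    simp only [lt_iSup_iff] at hgt
    obtain ⟨z, ⟨n, hn, rfl⟩, hzgt⟩ := hgt
    exact ⟨n, le_trans hN' hn, hzgt⟩
  obtain ⟨ψ, hψmono, hψ⟩ := Filter.extraction_of_frequently_atTop hfreq
  obtain ⟨a, θ, hθ, hta⟩ := CompactSpace.tendsto_subseq (fun j => u (ψ j))
  have haS : a ∈ S := by
    rw [hS]
    have hta' : Tendsto (u ∘ (ψ ∘ θ)) atTop (𝓝 a) := hta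
    exact MapClusterPt.of_comp ((hψmono.comp hθ).tendsto_atTop) hta'.mapClusterPt
  have hzero : infEdist a S = 0 := infEdist_zero_of_mem haS
  have hcont : Tendsto (fun j => infEdist (u (ψ (θ j))) S) atTop (𝓝 (infEdist a S)) :=
    (continuous_infEdist.tendsto a).comp hta
  have hge : ε ≤ infEdist a S :=
    ge_of_tendsto hcont (Eventually.of_forall fun j => (hψ (θ j)).le)
  rw [hzero] at hge
  exact absurd (lt_of_lt_of_le hε hge) (lt_irrefl 0)

end AuxHausdorff

/-- For a continuous map `f` on a compact metric space `M`, the map `x ↦ pw(x)` sending a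
point to the (nonempty compact) set of weak-* accumulation points of its empirical measures,
viewed as a map into the space of nonempty compact subsets of `P(M)` with the Hausdorff
metric (for a metric on `P(M)` compatible with the weak-* topology), is Borel measurable. -/
theorem pw_map_borel_measurable
    {M : Type*} [MetricSpace M] [CompactSpace M] [MeasurableSpace M] [BorelSpace M]
    (f : M → M) (hf : Continuous f)
    (emp : M → ℕ → ProbabilityMeasure M)
    (hemp : ∀ (x : M) (n : ℕ), (emp x n : Measure M) =
      (((n + 1 : ℕ) : ℝ≥0∞))⁻¹ • ∑ k ∈ Finset.range (n + 1), Measure.dirac (f^[k] x))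
    (pwK : M → NonemptyCompacts (ProbabilityMeasure M))
    (hpwK : ∀ x : M, (pwK x : Set (ProbabilityMeasure M)) =
      {ν : ProbabilityMeasure M | MapClusterPt ν atTop (emp x)}) :
    letI : MetricSpace (ProbabilityMeasure M) :=
      TopologicalSpace.metrizableSpaceMetric (ProbabilityMeasure M)
    letI : MeasurableSpace (NonemptyCompacts (ProbabilityMeasure M)) :=
      borel (NonemptyCompacts (ProbabilityMeasure M))
    Measurable pwK := by
  letI instP : MetricSpace (ProbabilityMeasure M) :=
    TopologicalSpace.metrizableSpaceMetric (ProbabilityMeasure M)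
  letI instK : MeasurableSpace (NonemptyCompacts (ProbabilityMeasure M)) :=
    borel (NonemptyCompacts (ProbabilityMeasure M))
  show Measurable pwK
  haveI : CompactSpace (ProbabilityMeasure M) := pwAux_compactSpace
  -- continuity of the empirical measures in the starting point
  have hemp_cont : ∀ n, Continuous fun x => emp x n := by
    intro n
    rw [continuous_iff_continuousAt]
    intro x₀
    rw [ContinuousAt, ProbabilityMeasure.tendsto_iff_forall_lintegral_tendsto]
    intro g
    have key : ∀ x : M, ∫⁻ ω, (g ω : ℝ≥0∞) ∂(emp x n : Measure M)
        = (((n + 1 : ℕ) : ℝ≥0∞))⁻¹ * ∑ k ∈ Finset.range (n + 1), (g (f^[k] x) : ℝ≥0∞) := by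
      intro x
      rw [hemp x n, lintegral_smul_measure, lintegral_finset_sum_measure]
      congr 1
      refine Finset.sum_congr rfl fun k _ => ?_
      exact lintegral_dirac' _ (measurable_coe_nnreal_ennreal.comp g.continuous.measurable)
    simp only [key]
    have hcont : Continuous fun x : M =>
        (((n + 1 : ℕ) : ℝ≥0∞))⁻¹ * ∑ k ∈ Finset.range (n + 1), (g (f^[k] x) : ℝ≥0∞) := by
      refine (ENNReal.continuous_const_mul ?_).comp ?_
      · exact ENNReal.inv_ne_top.mpr (by simp)
      · refine continuous_finset_sum _ fun k _ => ?_
        exact ENNReal.continuous_coe.comp (g.continuous.comp (hf.iterate k))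
    exact hcont.tendsto x₀
  -- the measurability criterion via distances
  refine pwAux_measurable_of_measurable_dist ?_
  intro y
  -- a dense sequence in y
  haveI : Nonempty ↥(y : Set (ProbabilityMeasure M)) := y.nonempty.to_subtype
  obtain ⟨b, hb⟩ := TopologicalSpace.exists_dense_seq ↥(y : Set (ProbabilityMeasure M))
  -- the approximating functions
  set F : ℕ → M → ℝ≥0∞ := fun N x =>
    (⨆ j, EMetric.infEdist (emp x (N + j)) (y : Set (ProbabilityMeasure M)))
    ⊔ (⨆ i, ⨅ j, edist ((b i : ProbabilityMeasure M)) (emp x (N + j))) with hFdef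
  have hinf : ∀ (x : M) (N : ℕ) (z : ProbabilityMeasure M),
      EMetric.infEdist z (Set.range fun j => emp x (N + j)) = ⨅ j, edist z (emp x (N + j)) := by
    intro x N z
    rw [EMetric.infEdist, Metric.infEDist]
    rw [iInf_range]
  have hFeq : ∀ N x, EMetric.hausdorffEdist (emp x '' Set.Ici N)
      (y : Set (ProbabilityMeasure M)) = F N x := by
    intro N x
    rw [show EMetric.hausdorffEdist (emp x '' Set.Ici N) (y : Set (ProbabilityMeasure M)) =
      (⨆ z ∈ emp x '' Set.Ici N, EMetric.infEdist z (y : Set (ProbabilityMeasure M))) ⊔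
      ⨆ z ∈ (y : Set (ProbabilityMeasure M)), EMetric.infEdist z (emp x '' Set.Ici N)
      from Metric.hausdorffEDist_def _ _, pwAux_image_Ici_eq_range]
    congr 1
    · rw [iSup_range]
    · apply le_antisymm
      · refine iSup₂_le fun z hz => ?_
        have hzc : z ∈ closure (Set.range fun i => ((b i : ProbabilityMeasure M))) := by
          have h2 : (⟨z, hz⟩ : ↥(y : Set (ProbabilityMeasure M))) ∈ closure (Set.range b) := by
            rw [hb.closure_range]
            trivial
          have h3 := image_closure_subset_closure_image
            (f := (Subtype.val : ↥(y : Set (ProbabilityMeasure M)) → ProbabilityMeasure M))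
            continuous_subtype_val (Set.mem_image_of_mem _ h2)
          rw [← Set.range_comp] at h3
          exact h3
        obtain ⟨w, hw, hwt⟩ := mem_closure_iff_seq_limit.mp hzc
        refine le_of_tendsto ((EMetric.continuous_infEdist.tendsto z).comp hwt)
          (Eventually.of_forall fun k => ?_)
        obtain ⟨i, hi⟩ := hw k
        simp only [Function.comp_apply, ← hi, hinf]
        exact (hinf x N _).trans_le (le_iSup (fun i => ⨅ j, edist ((b i : ProbabilityMeasure M)) (emp x (N + j))) i)
      · refine iSup_le fun i => ?_
        rw [← hinf x N]
        exact le_iSup₂ (f := fun z (_ : z ∈ (y : Set (ProbabilityMeasure M))) =>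
          EMetric.infEdist z (Set.range fun j => emp x (N + j)))
          ((b i : ProbabilityMeasure M)) (b i).2
  have hFmeas : ∀ N, Measurable fun x => (F N x).toReal := by
    intro N
    apply Measurable.ennreal_toReal
    apply Measurable.sup
    · exact Measurable.iSup fun j =>
        (EMetric.continuous_infEdist.comp (hemp_cont (N + j))).measurable
    · exact Measurable.iSup fun i => Measurable.iInf fun j =>
        (continuous_const.edist (hemp_cont (N + j))).measurable
  have htend : ∀ x, Tendsto (fun N => (F N x).toReal) atTop (𝓝 (dist (pwK x) y)) := by
    intro x
    have hD := pwAux_tendsto_hausdorffEdist_tail (emp x)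
      (pwK x : Set (ProbabilityMeasure M)) (hpwK x)
    set ρ := EMetric.hausdorffEdist (pwK x : Set (ProbabilityMeasure M))
      (y : Set (ProbabilityMeasure M)) with hρdef
    have hρne : ρ ≠ ⊤ := Metric.hausdorffEdist_ne_top_of_nonempty_of_bounded
      (pwK x).nonempty y.nonempty (pwK x).isCompact.isBounded y.isCompact.isBounded
    have htendE : Tendsto (fun N => EMetric.hausdorffEdist (emp x '' Set.Ici N)
        (y : Set (ProbabilityMeasure M))) atTop (𝓝 ρ) := by
      have hub : ∀ N : ℕ, EMetric.hausdorffEdist (emp x '' Set.Ici N)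
          (y : Set (ProbabilityMeasure M))
          ≤ ρ + EMetric.hausdorffEdist (emp x '' Set.Ici N)
              (pwK x : Set (ProbabilityMeasure M)) := by
        intro N
        calc EMetric.hausdorffEdist (emp x '' Set.Ici N) (y : Set (ProbabilityMeasure M))
            ≤ EMetric.hausdorffEdist (emp x '' Set.Ici N)
                (pwK x : Set (ProbabilityMeasure M)) + ρ :=
              EMetric.hausdorffEdist_triangle
          _ = ρ + _ := add_comm _ _
      have hlb : ∀ N : ℕ, ρ - EMetric.hausdorffEdist (emp x '' Set.Ici N)
          (pwK x : Set (ProbabilityMeasure M))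
          ≤ EMetric.hausdorffEdist (emp x '' Set.Ici N) (y : Set (ProbabilityMeasure M)) := by
        intro N
        rw [tsub_le_iff_left]
        calc ρ ≤ EMetric.hausdorffEdist (pwK x : Set (ProbabilityMeasure M))
                (emp x '' Set.Ici N)
              + EMetric.hausdorffEdist (emp x '' Set.Ici N) (y : Set (ProbabilityMeasure M)) :=
              EMetric.hausdorffEdist_triangle
          _ = _ := by simp only [EMetric.hausdorffEdist]; rw [Metric.hausdorffEDist_comm]
      refine tendsto_of_tendsto_of_tendsto_of_le_of_le ?_ ?_ hlb hub
      · have : Tendsto (fun N => ρ - EMetric.hausdorffEdist (emp x '' Set.Ici N)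
            (pwK x : Set (ProbabilityMeasure M))) atTop (𝓝 (ρ - 0)) :=
          ENNReal.Tendsto.sub tendsto_const_nhds hD (Or.inl hρne)
        simpa using this
      · have : Tendsto (fun N => ρ + EMetric.hausdorffEdist (emp x '' Set.Ici N)
            (pwK x : Set (ProbabilityMeasure M))) atTop (𝓝 (ρ + 0)) :=
          Tendsto.add tendsto_const_nhds hD
        simpa using this
    have htoReal := (ENNReal.tendsto_toReal hρne).comp htendE
    have hdist : dist (pwK x) y = ρ.toReal := by
      rw [Metric.NonemptyCompacts.dist_eq]
      rfl
    rw [hdist]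
    refine htoReal.congr fun N => ?_
    simp only [Function.comp_apply, hFeq N x]
  exact measurable_of_tendsto_metrizable hFmeas (tendsto_pi_nhds.mpr htend)
end
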